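/- Let A, B be real symmetric n×n matrices that are SDC, with B singular and A nonsingular. Then there exists a nonsingular matrix U such that UᵀBU = diag(B₁, 0) and UᵀAU = diag(A₁, A₃), where B₁ and A₁ are symmetric of the same size p×p (p = rank B), B₁ is nonsingular, and A₃ is symmetric nonsingular of size (n-p)×(n-p). -/

import Mathlib

open Matrix

/-- If symmetric A, B are SDC with B singular and A nonsingular, then there is a nonsingular U
putting B into diag(B₁,0) and A into diag(A₁,A₃) with B₁ nonsingular of size rank B and A₃
nonsingular. -/
theorem sdc_singular_B_nonsingular_A_decomposition {n : ℕ}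
    (A B : Matrix (Fin n) (Fin n) ℝ) (hA : A.IsSymm) (hB : B.IsSymm)
    (hsdc : ∃ P : Matrix (Fin n) (Fin n) ℝ, IsUnit P.det ∧
      (Pᵀ * A * P).IsDiag ∧ (Pᵀ * B * P).IsDiag)
    (hBsing : ¬ IsUnit B.det) (hAinv : IsUnit A.det) :
    ∃ (q : ℕ) (_ : B.rank + q = n) (e : Fin n ≃ Fin B.rank ⊕ Fin q)
      (U : Matrix (Fin n) (Fin n) ℝ) (_ : IsUnit U.det)
      (B₁ A₁ : Matrix (Fin B.rank) (Fin B.rank) ℝ) (A₃ : Matrix (Fin q) (Fin q) ℝ),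
      B₁.IsSymm ∧ A₁.IsSymm ∧ A₃.IsSymm ∧ IsUnit B₁.det ∧ IsUnit A₃.det ∧
      Uᵀ * B * U = (Matrix.fromBlocks B₁ 0 0 0).submatrix e e ∧
      Uᵀ * A * U = (Matrix.fromBlocks A₁ 0 0 A₃).submatrix e e := by
  classical
  obtain ⟨P, hP, hEdiag, hDdiag⟩ := hsdc
  set D := Pᵀ * B * P with hDdef
  set E := Pᵀ * A * P with hEdef
  have hPt : IsUnit Pᵀ.det := by rwa [Matrix.det_transpose]
  -- all diagonal entries of E are nonzero
  have hEdet : IsUnit E.det := by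
    rw [hEdef, Matrix.det_mul, Matrix.det_mul]
    exact (hPt.mul hAinv).mul hP
  have hEdiag' : Matrix.diagonal E.diag = E := hEdiag.diagonal_diag
  have hEnz : ∀ i, E i i ≠ 0 := by
    intro i
    have : E.det ≠ 0 := hEdet.ne_zero
    rw [← hEdiag', Matrix.det_diagonal] at this
    intro h
    exact this (Finset.prod_eq_zero (Finset.mem_univ i) h)
  -- rank of B equals number of nonzero diagonal entries of D
  have hrankD : D.rank = B.rank := by
    rw [hDdef, Matrix.rank_mul_eq_left_of_isUnit_det _ _ hP,
      Matrix.rank_mul_eq_right_of_isUnit_det _ _ hPt]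
  have hcard : Fintype.card {i // D.diag i ≠ 0} = B.rank := by
    rw [← hrankD, ← hDdiag.diagonal_diag, Matrix.rank_diagonal, Matrix.diag_diagonal]
  set q := Fintype.card {i // ¬ D.diag i ≠ 0} with hq
  have hsum : B.rank + q = n := by
    rw [← hcard, hq, ← Fintype.card_sum,
      Fintype.card_congr (Equiv.sumCompl (fun i => D.diag i ≠ 0)), Fintype.card_fin]
  have eS : {i // D.diag i ≠ 0} ≃ Fin B.rank := Fintype.equivFinOfCardEq hcard
  have eSc : {i // ¬ D.diag i ≠ 0} ≃ Fin q := Fintype.equivFinOfCardEq rfl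
  set e : Fin n ≃ Fin B.rank ⊕ Fin q :=
    (Equiv.sumCompl (fun i => D.diag i ≠ 0)).symm.trans (Equiv.sumCongr eS eSc) with he
  have hel : ∀ i : Fin B.rank, e.symm (Sum.inl i) = ((eS.symm i : {i // D.diag i ≠ 0}) : Fin n) := by
    intro i; simp [he]; rfl
  have her : ∀ i : Fin q, e.symm (Sum.inr i) = ((eSc.symm i : {i // ¬ D.diag i ≠ 0}) : Fin n) := by
    intro i; simp [he]; rfl
  set f : Fin B.rank ⊕ Fin q → Fin n := fun x => e.symm x with hf
  have hfinj : Function.Injective f := fun x y h => e.symm.injective h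
  set b : Fin B.rank → ℝ := fun i => D (f (Sum.inl i)) (f (Sum.inl i)) with hb
  set a₁ : Fin B.rank → ℝ := fun i => E (f (Sum.inl i)) (f (Sum.inl i)) with ha₁
  set a₃ : Fin q → ℝ := fun i => E (f (Sum.inr i)) (f (Sum.inr i)) with ha₃
  refine ⟨q, hsum, e, P, hP, Matrix.diagonal b, Matrix.diagonal a₁, Matrix.diagonal a₃,
    Matrix.isSymm_diagonal b, Matrix.isSymm_diagonal a₁, Matrix.isSymm_diagonal a₃, ?_, ?_, ?_, ?_⟩
  · rw [isUnit_iff_ne_zero, Matrix.det_diagonal]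
    rw [Finset.prod_ne_zero_iff]
    intro i _
    show D (e.symm (Sum.inl i)) (e.symm (Sum.inl i)) ≠ 0
    rw [hel]
    exact (eS.symm i).2
  · rw [isUnit_iff_ne_zero, Matrix.det_diagonal]
    rw [Finset.prod_ne_zero_iff]
    intro i _
    exact hEnz _
  · have key : Matrix.fromBlocks (Matrix.diagonal b) 0 0 0 = D.submatrix f f := by
      ext i j
      cases i with
      | inl i =>
        cases j with
        | inl j =>
          by_cases h : i = j
          · subst h; simp [Matrix.diagonal]; rfl
          · simp only [Matrix.fromBlocks_apply₁₁, Matrix.submatrix_apply,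
              Matrix.diagonal_apply_ne _ h]
            exact (hDdiag (fun hc => h (Sum.inl_injective (hfinj hc)))).symm
        | inr j =>
          simp only [Matrix.fromBlocks_apply₁₂, Matrix.submatrix_apply, Matrix.zero_apply]
          exact (hDdiag (fun hc => Sum.inl_ne_inr (hfinj hc))).symm
      | inr i =>
        cases j with
        | inl j =>
          simp only [Matrix.fromBlocks_apply₂₁, Matrix.submatrix_apply, Matrix.zero_apply]
          exact (hDdiag (fun hc => Sum.inr_ne_inl (hfinj hc))).symm
        | inr j =>
          by_cases h : i = j
          · subst h
            simp only [Matrix.fromBlocks_apply₂₂, Matrix.submatrix_apply, Matrix.zero_apply]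
            have h2 := (eSc.symm i).2
            rw [not_not] at h2
            show (0:ℝ) = D (e.symm (Sum.inr i)) (e.symm (Sum.inr i))
            rw [her]
            exact h2.symm
          · simp only [Matrix.fromBlocks_apply₂₂, Matrix.submatrix_apply, Matrix.zero_apply]
            exact (hDdiag (fun hc => h (Sum.inr_injective (hfinj hc)))).symm
    rw [← hDdef, key, Matrix.submatrix_submatrix]
    have : f ∘ e = id := by
      ext x; simp [hf]
    rw [this, Matrix.submatrix_id_id]
  · have key : Matrix.fromBlocks (Matrix.diagonal a₁) 0 0 (Matrix.diagonal a₃) =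
        E.submatrix f f := by
      ext i j
      cases i with
      | inl i =>
        cases j with
        | inl j =>
          by_cases h : i = j
          · subst h; simp [Matrix.diagonal]; rfl
          · simp only [Matrix.fromBlocks_apply₁₁, Matrix.submatrix_apply,
              Matrix.diagonal_apply_ne _ h]
            exact (hEdiag (fun hc => h (Sum.inl_injective (hfinj hc)))).symm
        | inr j =>
          simp only [Matrix.fromBlocks_apply₁₂, Matrix.submatrix_apply, Matrix.zero_apply]
          exact (hEdiag (fun hc => Sum.inl_ne_inr (hfinj hc))).symm
      | inr i =>
        cases j with
        | inl j =>
          simp only [Matrix.fromBlocks_apply₂₁, Matrix.submatrix_apply, Matrix.zero_apply]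
          exact (hEdiag (fun hc => Sum.inr_ne_inl (hfinj hc))).symm
        | inr j =>
          by_cases h : i = j
          · subst h; simp [Matrix.diagonal]; rfl
          · simp only [Matrix.fromBlocks_apply₂₂, Matrix.submatrix_apply,
              Matrix.diagonal_apply_ne _ h]
            exact (hEdiag (fun hc => h (Sum.inr_injective (hfinj hc)))).symm
    rw [← hEdef, key, Matrix.submatrix_submatrix]
    have : f ∘ e = id := by
      ext x; simp [hf]
    rw [this, Matrix.submatrix_id_id]
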